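/- Let T be an observation tree for a Mealy machine M (via a functional simulation f : T → M), and let P ⊆ Q^T be a set of pairwise apart states of T. Then |P| is at most the number of equivalence classes of the relation ≈ on Q^M. -/

import Mathlib

open scoped Classical

/-- A Mealy machine over input alphabet `I` and output alphabet `O`, with state
type `Q`, initial state `q0`, and a partial combined output/transition map
`trans : Q × I ⇀ O × Q` (so the output and transition functions are defined on
exactly the same pairs). -/
structure Mealy (Q I O : Type) where
  q0 : Q
  trans : Q → I → Option (O × Q)

namespace Mealy

variable {Q Q' I O : Type}

/-- Extension of the combined output/transition map to input words. -/
def stepStar (M : Mealy Q I O) : Q → List I → Option (List O × Q)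
  | q, [] => some ([], q)
  | q, i :: σ => (M.trans q i).bind fun p =>
      (stepStar M p.2 σ).map fun r => (p.1 :: r.1, r.2)

/-- `λ(q, σ)`: the output word produced from `q` on input word `σ` (if defined);
this is also the semantics `⟦q⟧ : I* ⇀ O*` of the state `q`. -/
def outStar (M : Mealy Q I O) (q : Q) (σ : List I) : Option (List O) :=
  (M.stepStar q σ).map Prod.fst

/-- `δ(q, σ)`: the state reached from `q` on input word `σ` (if defined). -/
def delStar (M : Mealy Q I O) (q : Q) (σ : List I) : Option Q :=
  (M.stepStar q σ).map Prod.snd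

/-- `σ ⊢ q # p`: the word `σ` witnesses apartness of `q` and `p`. -/
def ApartW (M : Mealy Q I O) (σ : List I) (q p : Q) : Prop :=
  (M.outStar q σ).isSome ∧ (M.outStar p σ).isSome ∧ M.outStar q σ ≠ M.outStar p σ

/-- `q # p`: states `q` and `p` are apart. -/
def Apart (M : Mealy Q I O) (q p : Q) : Prop := ∃ σ, M.ApartW σ q p

/-- `q ≈ r`: states `q` (of `M`) and `r` (of `N`) are equivalent, i.e. have equal
semantics `⟦q⟧ = ⟦r⟧` as partial maps `I* ⇀ O*`. -/
def StateEquiv (M : Mealy Q I O) (N : Mealy Q' I O) (q : Q) (r : Q') : Prop :=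
  ∀ σ, M.outStar q σ = N.outStar r σ

/-- A functional simulation `f : M → N`. -/
def FunSim (M : Mealy Q I O) (N : Mealy Q' I O) (f : Q → Q') : Prop :=
  f M.q0 = N.q0 ∧
    ∀ q i o q'', M.trans q i = some (o, q'') → N.trans (f q) i = some (o, f q'')

/-- A Mealy machine is complete if its transition map is total. -/
def Complete (M : Mealy Q I O) : Prop := ∀ q i, (M.trans q i).isSome

/-- A Mealy machine is a tree if every state is reached from the root by a
unique input word (its access sequence). -/
def IsTree (M : Mealy Q I O) : Prop :=
  ∀ q : Q, ∃! σ : List I, M.delStar M.q0 σ = some q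

/-- `S` is a basis of the observation tree `T`: a subtree containing the root
whose states are pairwise apart. -/
structure IsBasis (T : Mealy Q I O) (S : Set Q) : Prop where
  root_mem : T.q0 ∈ S
  subtree_closed : ∀ q i o q', T.trans q i = some (o, q') → q' ∈ S → q ∈ S
  pairwise_apart : ∀ p ∈ S, ∀ q ∈ S, p ≠ q → T.Apart p q

/-- The frontier `F`: immediate non-basis successors of basis states. -/
def frontier (T : Mealy Q I O) (S : Set Q) : Set Q :=
  {q' | q' ∉ S ∧ ∃ q ∈ S, ∃ i o, T.trans q i = some (o, q')}

/-- The basis `S` is complete: each basis state has a transition for each input. -/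
def BasisComplete (T : Mealy Q I O) (S : Set Q) : Prop :=
  ∀ q ∈ S, ∀ i : I, (T.trans q i).isSome

/-- A Mealy machine `H` with state set `S` contains the basis `S` of `T`:
`δ^H(q0^H, access(q)) = q` for every `q ∈ S`. -/
def ContainsBasis (T : Mealy Q I O) (S : Set Q) (H : Mealy ↥S I O) : Prop :=
  ∀ (q : ↥S) (σ : List I), T.delStar T.q0 σ = some (q : Q) → H.delStar H.q0 σ = some q

/-- `H` is a hypothesis for the observation tree `T` with basis `S`. -/
def IsHypothesis (T : Mealy Q I O) (S : Set Q) (H : Mealy ↥S I O) : Prop :=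
  H.Complete ∧ ContainsBasis T S H ∧
    ∀ (q : ↥S) (i : I) (o' : O) (p' : ↥S), H.trans q i = some (o', p') →
      ∀ (o : O) (p : Q), T.trans (q : Q) i = some (o, p) → o = o' ∧ ¬ T.Apart p (p' : Q)

/-- The equivalence `≈` on the states of a single machine, as a setoid. -/
def equivSetoid (M : Mealy Q I O) : Setoid Q :=
  ⟨fun q r => M.StateEquiv M q r,
   ⟨fun _ _ => rfl, fun h σ => (h σ).symm, fun h1 h2 σ => (h1 σ).trans (h2 σ)⟩⟩

/-- `R` is a bisimulation between `M` and `N`. -/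
def IsBisimulation (M : Mealy Q I O) (N : Mealy Q' I O) (R : Q → Q' → Prop) : Prop :=
  R M.q0 N.q0 ∧
    ∀ q r, R q r → ∀ i o q', M.trans q i = some (o, q') →
      ∃ r', N.trans r i = some (o, r') ∧ R q' r'

end Mealy


theorem sim_stepStar {QT QM I O : Type} (T : Mealy QT I O) (M : Mealy QM I O)
    (f : QT → QM) (hf : T.FunSim M f) :
    ∀ (σ : List I) (q : QT) (w : List O) (q' : QT),
      T.stepStar q σ = some (w, q') → M.stepStar (f q) σ = some (w, f q') := by
  intro σ
  induction σ with
  | nil => intro q w q' h; simp [Mealy.stepStar] at h; simp [Mealy.stepStar, h.1, h.2]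
  | cons i σ ih =>
    intro q w q' h
    simp only [Mealy.stepStar, Option.bind_eq_some_iff, Option.map_eq_some_iff] at h ⊢
    obtain ⟨⟨o, p⟩, htr, ⟨r, hs, hr⟩⟩ := h
    exact ⟨(o, f p), hf.2 q i o p htr, ⟨(r.1, f r.2), ih p r.1 r.2 (by simpa using hs), by
      injection hr with h1 h2; rw [h1, h2]⟩⟩

theorem sim_outStar {QT QM I O : Type} (T : Mealy QT I O) (M : Mealy QM I O)
    (f : QT → QM) (hf : T.FunSim M f) (q : QT) (σ : List I)
    (h : (T.outStar q σ).isSome) : M.outStar (f q) σ = T.outStar q σ := by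
  rw [Mealy.outStar, Option.isSome_iff_exists] at h
  obtain ⟨w, hw⟩ := h
  rw [Option.map_eq_some_iff] at hw
  obtain ⟨⟨w', q'⟩, hs, hw'⟩ := hw
  rw [Mealy.outStar, Mealy.outStar, hs, sim_stepStar T M f hf σ q w' q' hs]; simp

/-- If `T` is an observation tree for `M` (via a functional
simulation `f : T → M`) and `P ⊆ Q^T` is a set of pairwise apart states, then
`|P|` is at most the number of equivalence classes of `≈` on `Q^M`. -/
theorem statement_7 {QT QM I O : Type} [Fintype I] [Fintype QT] [Fintype QM]
    (T : Mealy QT I O) (M : Mealy QM I O) (htree : T.IsTree)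
    (f : QT → QM) (hf : T.FunSim M f)
    (P : Set QT) (hP : ∀ p ∈ P, ∀ q ∈ P, p ≠ q → T.Apart p q) :
    Nat.card ↥P ≤ Nat.card (Quotient M.equivSetoid) := by
  have hfin : Finite (Quotient M.equivSetoid) := Quotient.finite _
  have : Function.Injective (fun p : ↥P => Quotient.mk M.equivSetoid (f p)) := by
    rintro ⟨p, hp⟩ ⟨q, hq⟩ h
    simp only [Quotient.eq] at h
    by_contra hne
    have hpq : p ≠ q := fun e => hne (by simpa using e)
    obtain ⟨σ, h1, h2, h3⟩ := hP p hp q hq hpq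
    exact h3 ((sim_outStar T M f hf p σ h1).symm.trans
      ((h σ).trans (sim_outStar T M f hf q σ h2)))
  exact Nat.card_le_card_of_injective _ this
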